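/- Graphs in Reissner–Nordström(-AdS) solve the vacuum charged constraints (radial content of Lemma 2.4). Let n ≥ 3, M, Q ∈ ℝ, λ ≥ 0, and V_RN(r) = 1 − 2M/r^{n−2} + Q²/r^{2(n−2)} + λ·r². Let I ⊂ (0,∞) be an interval on which V_RN > 0, and let f : I → ℝ be twice differentiable with |V_RN·f′| < 1 on I. Define V_f = V_RN/(1 − (V_RN·f′)²), k_S(r) = −(n−1)·V_RN(r)·f′(r)·√(V_f(r))/r, k_I(r) = (d/dr)[r·k_S(r)/(n−1)], and E_I(r) = √((n−1)(n−2)/2)·Q/(r^{n−1}·√(V_f(r))). Then for all r ∈ I: (i) r^{n−1}·√(V_f(r))·E_I(r) is constant, with charge q = √(2/((n−1)(n−2)))·r^{n−1}·√(V_f)·E_I = Q; (ii) k_I − k_S/(n−1) − r·k_S′/(n−1) = 0; and (iii) R_f + (k_I + k_S)² − k_I² − k_S²/(n−1) − 2·V_f·E_I² + n(n−1)·λ = 0, where R_f(r) = (n−1)·r^{1−n}·(d/dr)[r^{n−2}·(1 − V_f(r))]. That is, the radial Einstein–Maxwell constraints hold with μ̂ = 0 and Ĵ_ν = 0. -/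

import Mathlib

open Real Filter

open Topology

/-- The Reissner–Nordström(-AdS) metric function
`V_RN(r) = 1 - 2M/r^{n-2} + Q²/r^{2(n-2)} + λ r²`. -/
noncomputable def VRN (n : ℕ) (M Q lam : ℝ) (r : ℝ) : ℝ :=
  1 - 2 * M / r ^ (n - 2) + Q ^ 2 / r ^ (2 * (n - 2)) + lam * r ^ 2

/-- Radial metric function induced on the graph `t = f(r)`:
`V_f = V_RN / (1 - (V_RN f')²)`. -/
noncomputable def Vgraph (n : ℕ) (M Q lam : ℝ) (f : ℝ → ℝ) (r : ℝ) : ℝ :=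
  VRN n M Q lam r / (1 - (VRN n M Q lam r * deriv f r) ^ 2)

/-- Spherical part of the extrinsic curvature of the graph:
`k_S = -(n-1) V_RN f' √(V_f)/r`. -/
noncomputable def kSgraph (n : ℕ) (M Q lam : ℝ) (f : ℝ → ℝ) (r : ℝ) : ℝ :=
  -(((n : ℝ) - 1) * VRN n M Q lam r * deriv f r * Real.sqrt (Vgraph n M Q lam f r)) / r

/-- Radial part of the extrinsic curvature of the graph: `k_I = (d/dr)[r k_S/(n-1)]`. -/
noncomputable def kIgraph (n : ℕ) (M Q lam : ℝ) (f : ℝ → ℝ) (r : ℝ) : ℝ :=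
  deriv (fun ρ => ρ * kSgraph n M Q lam f ρ / ((n : ℝ) - 1)) r

/-- Radial electric field on the graph: `E_I = √((n-1)(n-2)/2)·Q/(r^{n-1}√(V_f))`. -/
noncomputable def EIgraph (n : ℕ) (M Q lam : ℝ) (f : ℝ → ℝ) (r : ℝ) : ℝ :=
  Real.sqrt (((n : ℝ) - 1) * ((n : ℝ) - 2) / 2) * Q
    / (r ^ (n - 1) * Real.sqrt (Vgraph n M Q lam f r))

/-- Scalar curvature of the induced metric: `R_f = (n-1) r^{1-n} (d/dr)[r^{n-2}(1 - V_f)]`. -/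
noncomputable def Rgraph (n : ℕ) (M Q lam : ℝ) (f : ℝ → ℝ) (r : ℝ) : ℝ :=
  ((n : ℝ) - 1) / r ^ (n - 1) * deriv (fun ρ => ρ ^ (n - 2) * (1 - Vgraph n M Q lam f ρ)) r

set_option maxHeartbeats 2000000 in
/-- Graphs in Reissner–Nordström(-AdS) solve the vacuum charged constraints (radial content of
Lemma 2.4): on an interval where `V_RN > 0`, for a twice differentiable spacelike graph profile
`f`, (i) `r^{n-1}√(V_f)E_I` is constant with charge `q = Q`, (ii) the momentum constraint holds
with `Ĵ_ν = 0`, and (iii) the Hamiltonian constraint holds with `μ̂ = 0`. -/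
theorem RN_graph_solves_constraints (n : ℕ) (hn : 3 ≤ n) (M Q lam : ℝ) (hlam : 0 ≤ lam)
    (s : Set ℝ) (hsopen : IsOpen s) (hs : s ⊆ Set.Ioi (0 : ℝ))
    (hVRN : ∀ r ∈ s, 0 < VRN n M Q lam r)
    (f : ℝ → ℝ) (hf1 : ∀ r ∈ s, DifferentiableAt ℝ f r)
    (hf2 : ∀ r ∈ s, DifferentiableAt ℝ (deriv f) r)
    (hspacelike : ∀ r ∈ s, |VRN n M Q lam r * deriv f r| < 1) :
    ∀ r ∈ s,
      -- (i) Gauss law: `r^{n-1}√(V_f)E_I` is constant, with charge `q = Q`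
      (r ^ (n - 1) * Real.sqrt (Vgraph n M Q lam f r) * EIgraph n M Q lam f r
          = Real.sqrt (((n : ℝ) - 1) * ((n : ℝ) - 2) / 2) * Q) ∧
      (Real.sqrt (2 / (((n : ℝ) - 1) * ((n : ℝ) - 2))) * r ^ (n - 1)
          * Real.sqrt (Vgraph n M Q lam f r) * EIgraph n M Q lam f r = Q) ∧
      -- (ii) momentum constraint with `Ĵ_ν = 0`
      (kIgraph n M Q lam f r - kSgraph n M Q lam f r / ((n : ℝ) - 1)
          - r * deriv (kSgraph n M Q lam f) r / ((n : ℝ) - 1) = 0) ∧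
      -- (iii) Hamiltonian constraint with `μ̂ = 0`
      (Rgraph n M Q lam f r
          + (kIgraph n M Q lam f r + kSgraph n M Q lam f r) ^ 2
          - kIgraph n M Q lam f r ^ 2
          - kSgraph n M Q lam f r ^ 2 / ((n : ℝ) - 1)
          - 2 * Vgraph n M Q lam f r * EIgraph n M Q lam f r ^ 2
          + (n : ℝ) * ((n : ℝ) - 1) * lam = 0) := by

  obtain ⟨m, rfl⟩ : ∃ m, n = m + 3 := ⟨n - 3, by omega⟩
  clear hn
  intro r hr
  have hr0 : 0 < r := hs hr
  have hrne : r ≠ 0 := hr0.ne'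
  have hVr : 0 < VRN (m+3) M Q lam r := hVRN r hr
  have habs := hspacelike r hr
  have habs' := abs_lt.mp habs
  have hden : 0 < 1 - (VRN (m+3) M Q lam r * deriv f r)^2 := by nlinarith [habs'.1, habs'.2]
  have hWr : 0 < Vgraph (m+3) M Q lam f r := div_pos hVr hden
  have hsqW : 0 < Real.sqrt (Vgraph (m+3) M Q lam f r) := Real.sqrt_pos.mpr hWr
  have hc : ((m:ℝ)+2) ≠ 0 := by positivity
  -- derivative of VRN
  have hVfun : VRN (m+3) M Q lam = fun ρ => 1 - 2*M/ρ^(m+1) + Q^2/ρ^(2*m+2) + lam*ρ^2 := by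
    funext ρ
    simp only [VRN, show m+3-2 = m+1 by omega, show 2*(m+3-2) = 2*m+2 by omega, show 2*(m+1) = 2*m+2 by omega]
  have hpow1 : HasDerivAt (fun ρ:ℝ => ρ^(m+1)) (((m:ℝ)+1)*r^m) r := by
    have := hasDerivAt_pow (m+1) r
    simpa [Nat.add_sub_cancel] using this
  have hpow2 : HasDerivAt (fun ρ:ℝ => ρ^(2*m+2)) ((2*(m:ℝ)+2)*r^(2*m+1)) r := by
    have := hasDerivAt_pow (2*m+2) r
    simpa [Nat.add_sub_cancel] using this
  have hVd : HasDerivAt (VRN (m+3) M Q lam)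
      (2*M*((m:ℝ)+1)/r^(m+2) - 2*Q^2*((m:ℝ)+1)/r^(2*m+3) + 2*lam*r) r := by
    rw [hVfun]
    have hA : HasDerivAt (fun ρ:ℝ => 2*M/ρ^(m+1))
        ((0*r^(m+1) - 2*M*((((m:ℝ)+1))*r^m))/(r^(m+1))^2) r :=
      (hasDerivAt_const r (2*M)).div hpow1 (pow_ne_zero _ hrne)
    have hB : HasDerivAt (fun ρ:ℝ => Q^2/ρ^(2*m+2))
        ((0*r^(2*m+2) - Q^2*((2*(m:ℝ)+2)*r^(2*m+1)))/(r^(2*m+2))^2) r :=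
      (hasDerivAt_const r (Q^2)).div hpow2 (pow_ne_zero _ hrne)
    have hC : HasDerivAt (fun ρ:ℝ => lam*ρ^2) (lam*(2*r)) r := by
      simpa using (hasDerivAt_pow 2 r).const_mul lam
    have hAll := ((hA.const_sub 1).add hB).add hC
    refine hAll.congr_deriv ?_
    field_simp
    ring
  have hf2' : HasDerivAt (deriv f) (deriv (deriv f) r) r := (hf2 r hr).hasDerivAt
  have hu := hVd.mul hf2'
  have hWdiff : DifferentiableAt ℝ (Vgraph (m+3) M Q lam f) r :=
    (hVd.div ((hu.pow 2).const_sub 1) hden.ne').differentiableAt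
  set Wd := deriv (Vgraph (m+3) M Q lam f) r with hWdDef
  have hW' : HasDerivAt (Vgraph (m+3) M Q lam f) Wd r := hWdiff.hasDerivAt
  have hsqrt : HasDerivAt (fun ρ => Real.sqrt (Vgraph (m+3) M Q lam f ρ))
      (1/(2 * Real.sqrt (Vgraph (m+3) M Q lam f r)) * Wd) r :=
    (Real.hasDerivAt_sqrt hWr.ne').comp r hW'
  set G : ℝ → ℝ := fun ρ => VRN (m+3) M Q lam ρ * deriv f ρ * Real.sqrt (Vgraph (m+3) M Q lam f ρ)
    with hGdef
  have hG' : HasDerivAt G (deriv G r) r := by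
    have := hu.mul hsqrt
    rw [hGdef]
    exact (this.differentiableAt).hasDerivAt
  have hkSfun : kSgraph (m+3) M Q lam f = fun ρ => -(((m:ℝ)+2) * G ρ)/ρ := by
    funext ρ
    rw [hGdef]
    simp only [kSgraph]
    push_cast
    ring
  have hkSr : kSgraph (m+3) M Q lam f r = -(((m:ℝ)+2) * G r)/r := by rw [hkSfun]
  have hkSdiff : DifferentiableAt ℝ (kSgraph (m+3) M Q lam f) r := by
    rw [hkSfun]
    exact ((hG'.differentiableAt.const_mul _).neg.div differentiableAt_fun_id hrne)
  constructor
  · -- (i) first part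
    simp only [EIgraph, show m+3-1 = m+2 by omega]
    field_simp
  constructor
  · -- (i) second part (q = Q)
    have h1 : r ^ (m+3 - 1) * Real.sqrt (Vgraph (m+3) M Q lam f r) * EIgraph (m+3) M Q lam f r
        = Real.sqrt ((((m+3:ℕ):ℝ) - 1) * (((m+3:ℕ):ℝ) - 2) / 2) * Q := by
      simp only [EIgraph, show m+3-1 = m+2 by omega]
      field_simp
    have hP : (0:ℝ) < (((m+3:ℕ):ℝ) - 1) * (((m+3:ℕ):ℝ) - 2) := by
      push_cast; nlinarith [Nat.cast_nonneg (α := ℝ) m]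
    calc Real.sqrt (2 / ((((m+3:ℕ):ℝ) - 1) * (((m+3:ℕ):ℝ) - 2))) * r ^ (m+3 - 1)
          * Real.sqrt (Vgraph (m+3) M Q lam f r) * EIgraph (m+3) M Q lam f r
        = Real.sqrt (2 / ((((m+3:ℕ):ℝ) - 1) * (((m+3:ℕ):ℝ) - 2)))
          * (r ^ (m+3 - 1) * Real.sqrt (Vgraph (m+3) M Q lam f r)
            * EIgraph (m+3) M Q lam f r) := by ring
      _ = Real.sqrt (2 / ((((m+3:ℕ):ℝ) - 1) * (((m+3:ℕ):ℝ) - 2)))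
          * (Real.sqrt ((((m+3:ℕ):ℝ) - 1) * (((m+3:ℕ):ℝ) - 2) / 2) * Q) := by rw [h1]
      _ = Q := by
          have hhalf : (0:ℝ) < (((m+3:ℕ):ℝ) - 1) * (((m+3:ℕ):ℝ) - 2) / 2 := by positivity
          rw [show (2:ℝ) / ((((m+3:ℕ):ℝ) - 1) * (((m+3:ℕ):ℝ) - 2))
                = ((((m+3:ℕ):ℝ) - 1) * (((m+3:ℕ):ℝ) - 2) / 2)⁻¹ from (inv_div _ _).symm,
            Real.sqrt_inv, ← mul_assoc,
            inv_mul_cancel₀ (Real.sqrt_pos.mpr hhalf).ne', one_mul]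
  have hkId : HasDerivAt (fun ρ => ρ * kSgraph (m+3) M Q lam f ρ / (((m+3:ℕ):ℝ) - 1))
      ((1 * kSgraph (m+3) M Q lam f r + r * deriv (kSgraph (m+3) M Q lam f) r)
        / (((m+3:ℕ):ℝ) - 1)) r :=
    ((hasDerivAt_id r).mul hkSdiff.hasDerivAt).div_const _
  have hkIval2 : kIgraph (m+3) M Q lam f r
      = (1 * kSgraph (m+3) M Q lam f r + r * deriv (kSgraph (m+3) M Q lam f) r)
        / (((m+3:ℕ):ℝ) - 1) := by
    simp only [kIgraph]
    exact hkId.deriv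
  constructor
  · -- (ii)
    rw [hkIval2]
    ring
  -- (iii)
  have hkI : kIgraph (m+3) M Q lam f r = -deriv G r := by
    have hev : (fun ρ => ρ * kSgraph (m+3) M Q lam f ρ / (((m+3:ℕ):ℝ) - 1))
        =ᶠ[𝓝 r] fun ρ => -G ρ := by
      filter_upwards [eventually_ne_nhds hrne] with ρ hρ
      rw [hkSfun]
      have h31 : ((m:ℝ)+3-1) ≠ 0 := by
        have := Nat.cast_nonneg (α := ℝ) m; intro h; nlinarith
      push_cast
      field_simp [h31]
      ring
    simp only [kIgraph]
    rw [hev.deriv_eq, deriv.fun_neg]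
  have hVrval : VRN (m+3) M Q lam r = 1 - 2*M/r^(m+1) + Q^2/r^(2*m+2) + lam*r^2 := by
    rw [hVfun]
  have key : ∀ ρ : ℝ, 0 < VRN (m+3) M Q lam ρ → |VRN (m+3) M Q lam ρ * deriv f ρ| < 1 →
      G ρ ^ 2 = Vgraph (m+3) M Q lam f ρ - VRN (m+3) M Q lam ρ := by
    intro ρ h1 h2
    have h2' := abs_lt.mp h2
    have hd : 0 < 1 - (VRN (m+3) M Q lam ρ * deriv f ρ)^2 := by nlinarith [h2'.1, h2'.2]
    have hWρ : Vgraph (m+3) M Q lam f ρ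
        = VRN (m+3) M Q lam ρ / (1 - (VRN (m+3) M Q lam ρ * deriv f ρ)^2) := rfl
    have hWpos : 0 < Vgraph (m+3) M Q lam f ρ := by rw [hWρ]; exact div_pos h1 hd
    have hss : Real.sqrt (Vgraph (m+3) M Q lam f ρ) ^ 2 = Vgraph (m+3) M Q lam f ρ :=
      Real.sq_sqrt hWpos.le
    have hWV : Vgraph (m+3) M Q lam f ρ * (1 - (VRN (m+3) M Q lam ρ * deriv f ρ)^2)
        = VRN (m+3) M Q lam ρ := by
      rw [hWρ]; field_simp
      exact div_self (by rw [← mul_pow]; exact hd.ne')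
    rw [hGdef]
    simp only
    rw [mul_pow, hss]
    linear_combination -hWV
  have hgsq : G r ^ 2 = Vgraph (m+3) M Q lam f r - VRN (m+3) M Q lam r := key r hVr habs
  have hevsq : (fun ρ => G ρ ^ 2)
      =ᶠ[𝓝 r] fun ρ => Vgraph (m+3) M Q lam f ρ - VRN (m+3) M Q lam ρ := by
    have hVcont : ContinuousAt (VRN (m+3) M Q lam) r := hVd.continuousAt
    have hucont : ContinuousAt (fun ρ => VRN (m+3) M Q lam ρ * deriv f ρ) r := hu.continuousAt
    have hevV : ∀ᶠ ρ in 𝓝 r, 0 < VRN (m+3) M Q lam ρ :=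
      hVcont.eventually (eventually_gt_nhds hVr)
    have hevU : ∀ᶠ ρ in 𝓝 r, |VRN (m+3) M Q lam ρ * deriv f ρ| < 1 := by
      have hopen : IsOpen {y : ℝ | |y| < 1} := isOpen_lt continuous_abs continuous_const
      exact hucont.eventually (hopen.eventually_mem habs)
    filter_upwards [hevV, hevU] with ρ h1 h2
    exact key ρ h1 h2
  have h2g : 2 * G r * deriv G r
      = Wd - (2*M*((m:ℝ)+1)/r^(m+2) - 2*Q^2*((m:ℝ)+1)/r^(2*m+3) + 2*lam*r) := by
    have hL : HasDerivAt (fun ρ => G ρ ^ 2) (2 * G r ^ 1 * deriv G r) r := by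
      exact (hG'.pow 2).congr_deriv (by ring)
    have hR : HasDerivAt (fun ρ => Vgraph (m+3) M Q lam f ρ - VRN (m+3) M Q lam ρ) _ r := hW'.sub hVd
    have := hevsq.deriv_eq
    rw [hL.deriv, hR.deriv] at this
    simpa using this
  have hder : HasDerivAt (fun ρ => ρ^(m+1) * (1 - Vgraph (m+3) M Q lam f ρ))
      ((((m:ℝ)+1))*r^m*(1 - Vgraph (m+3) M Q lam f r) + r^(m+1)*(-Wd)) r :=
    hpow1.mul (hW'.const_sub 1)
  have e2 : Rgraph (m+3) M Q lam f r
      = ((m:ℝ)+2)*((m:ℝ)+1)*(1 - Vgraph (m+3) M Q lam f r)/r^2 - ((m:ℝ)+2)*Wd/r := by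
    simp only [Rgraph, show m+3-2 = m+1 by omega, show m+3-1 = m+2 by omega]
    rw [hder.deriv]
    push_cast
    field_simp
    ring
  have e3 : 2 * Vgraph (m+3) M Q lam f r * EIgraph (m+3) M Q lam f r ^ 2
      = ((m:ℝ)+2)*((m:ℝ)+1)*Q^2/r^(2*m+4) := by
    simp only [EIgraph, show m+3-1 = m+2 by omega]
    rw [div_pow, mul_pow,
      Real.sq_sqrt (by push_cast; nlinarith [Nat.cast_nonneg (α := ℝ) m] : (0:ℝ) ≤ (((m+3:ℕ):ℝ)-1)*(((m+3:ℕ):ℝ)-2)/2),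
      mul_pow, Real.sq_sqrt hWr.le]
    push_cast
    field_simp
    ring
  rw [hVrval] at hgsq
  have hm31 : ((m:ℝ)+3-1) ≠ 0 := by
    have := Nat.cast_nonneg (α := ℝ) m; intro h; nlinarith
  have hquad : (-deriv G r + -(((m:ℝ)+2) * G r) / r) ^ 2 - (-deriv G r)^2
      - (-(((m:ℝ)+2)*G r)/r)^2/((m:ℝ)+3-1)
      = ((m:ℝ)+2)/r * (2*G r*deriv G r) + ((m:ℝ)+2)*((m:ℝ)+1)/r^2 * G r^2 := by
    field_simp [hm31]
    ring
  have hfinal : ((m:ℝ)+2)*((m:ℝ)+1)*(1 - Vgraph (m+3) M Q lam f r)/r^2 - ((m:ℝ)+2)*Wd/r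
      + ((m:ℝ)+2)/r * (Wd - (2*M*((m:ℝ)+1)/r^(m+2) - 2*Q^2*((m:ℝ)+1)/r^(2*m+3) + 2*lam*r))
      + ((m:ℝ)+2)*((m:ℝ)+1)/r^2
        * (Vgraph (m+3) M Q lam f r - (1 - 2*M/r^(m+1) + Q^2/r^(2*m+2) + lam*r^2))
      - ((m:ℝ)+2)*((m:ℝ)+1)*Q^2/r^(2*m+4)
      + ((m:ℝ)+3)*((m:ℝ)+2)*lam = 0 := by
    field_simp
    ring
  rw [e2, hkI, hkSr, e3]
  push_cast
  linear_combination hquad + ((m:ℝ)+2)/r * h2g + ((m:ℝ)+2)*((m:ℝ)+1)/r^2 * hgsq + hfinal
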